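/- Let K be a flag simplicial complex whose one-skeleton is a chordal graph. Then every full subcomplex K_I is homotopy equivalent to a discrete set of points; in particular, H̃_p(K_I) = 0 for all p ≥ 1 and all I ⊆ [m]. -/

import Mathlib

/-- The sign `ε(i, σ) = (-1)^{#{j ∈ σ : j < i}}`. -/
def eps {m : ℕ} (i : Fin m) (σ : Finset (Fin m)) : ℤ :=
  (-1) ^ (σ.filter (fun j => j < i)).card

/-- The augmented (reduced) simplicial chain module on subsets of `[m]`. -/
abbrev Ch (m : ℕ) := Finset (Fin m) →₀ ℤ

/-- The simplicial boundary `∂(σ) = Σ_{i ∈ σ} ε(i,σ) (σ \ {i})`. -/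
noncomputable def bdry {m : ℕ} (x : Ch m) : Ch m :=
  x.sum fun σ c => ∑ i ∈ σ, (c * eps i σ) • Finsupp.single (σ.erase i) 1

/-- `K` is a flag complex: every set of vertices pairwise joined by edges is a face. -/
def IsFlag {m : ℕ} (K : Finset (Finset (Fin m))) : Prop :=
  ∀ S : Finset (Fin m), (∀ i ∈ S, ∀ j ∈ S, i ≠ j → ({i, j} : Finset (Fin m)) ∈ K) → S ∈ K

/-- The one-skeleton of `K`, as a simple graph on `[m]`. -/
def oneSkeleton {m : ℕ} (K : Finset (Finset (Fin m))) : SimpleGraph (Fin m) where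
  Adj i j := i ≠ j ∧ ({i, j} : Finset (Fin m)) ∈ K
  symm := by
    constructor
    intro i j h
    refine ⟨h.1.symm, ?_⟩
    rw [Finset.pair_comm]
    exact h.2
  loopless := by
    constructor
    intro i h
    exact h.1 rfl

/-- A graph is chordal if every cycle of length at least 4 has a chord. -/
def IsChordal {V : Type*} (G : SimpleGraph V) : Prop :=
  ∀ (v : V) (c : G.Walk v v), c.IsCycle → 4 ≤ c.length →
    ∃ x y, x ∈ c.support ∧ y ∈ c.support ∧ G.Adj x y ∧ s(x, y) ∉ c.edges

section Algebra
variable {m : ℕ}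

lemma eps_sq (i : Fin m) (σ : Finset (Fin m)) : eps i σ * eps i σ = 1 := by
  unfold eps; rw [← pow_add]; exact Even.neg_one_pow ⟨_, rfl⟩

lemma eps_self_erase (v : Fin m) (σ : Finset (Fin m)) : eps v (σ.erase v) = eps v σ := by
  unfold eps
  rw [Finset.filter_erase, Finset.erase_eq_of_notMem]
  simp

lemma eps_self_insert {v : Fin m} {σ : Finset (Fin m)} (h : v ∉ σ) :
    eps v (insert v σ) = eps v σ := by
  unfold eps; rw [Finset.filter_insert, if_neg (lt_irrefl v)]

lemma eps_erase {i j : Fin m} {σ : Finset (Fin m)} (hi : i ∈ σ) (hij : i ≠ j) :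
    eps j (σ.erase i) = (if i < j then -1 else 1) * eps j σ := by
  unfold eps
  rw [Finset.filter_erase]
  by_cases h : i < j
  · have hi' : i ∈ σ.filter (fun x => x < j) := Finset.mem_filter.2 ⟨hi, h⟩
    have hc : (σ.filter (fun x => x < j)).card
        = ((σ.filter (fun x => x < j)).erase i).card + 1 :=
      (Finset.card_erase_add_one hi').symm
    rw [if_pos h, hc, pow_succ]; ring
  · rw [if_neg h, Finset.erase_eq_of_notMem, one_mul]
    intro hc
    exact h (Finset.mem_filter.1 hc).2

lemma eps_insert {i j : Fin m} {σ : Finset (Fin m)} (hi : i ∉ σ) (hij : i ≠ j) :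
    eps j (insert i σ) = (if i < j then -1 else 1) * eps j σ := by
  unfold eps; rw [Finset.filter_insert]
  by_cases h : i < j
  · rw [if_pos h, if_pos h,
      Finset.card_insert_of_notMem (fun hc => hi (Finset.mem_filter.1 hc).1), pow_succ]
    ring
  · rw [if_neg h, if_neg h, one_mul]

lemma bdry_zero : bdry (0 : Ch m) = 0 := Finsupp.sum_zero_index

lemma bdry_single (σ : Finset (Fin m)) (c : ℤ) :
    bdry (Finsupp.single σ c) = ∑ i ∈ σ, (c * eps i σ) • Finsupp.single (σ.erase i) 1 := by
  unfold bdry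
  apply Finsupp.sum_single_index
  simp

lemma bdry_add (x y : Ch m) : bdry (x + y) = bdry x + bdry y := by
  unfold bdry
  apply Finsupp.sum_add_index' (fun σ => by simp)
  intro σ c1 c2
  rw [← Finset.sum_add_distrib]
  apply Finset.sum_congr rfl
  intro i _
  rw [add_mul, add_smul]

noncomputable def bdryH : Ch m →+ Ch m := AddMonoidHom.mk' bdry bdry_add

@[simp] lemma bdryH_apply (x : Ch m) : bdryH x = bdry x := rfl

lemma bdry_neg (x : Ch m) : bdry (-x) = -(bdry x) := map_neg bdryH x

lemma bdry_sub (x y : Ch m) : bdry (x - y) = bdry x - bdry y := map_sub bdryH x y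

noncomputable def cone (v : Fin m) (x : Ch m) : Ch m :=
  x.sum fun σ c => if v ∈ σ then 0 else (c * eps v σ) • Finsupp.single (insert v σ) 1

lemma cone_zero (v : Fin m) : cone v (0 : Ch m) = 0 := Finsupp.sum_zero_index

lemma cone_single (v : Fin m) (σ : Finset (Fin m)) (c : ℤ) :
    cone v (Finsupp.single σ c)
      = if v ∈ σ then 0 else (c * eps v σ) • Finsupp.single (insert v σ) 1 := by
  unfold cone
  apply Finsupp.sum_single_index
  simp

lemma cone_add (v : Fin m) (x y : Ch m) : cone v (x + y) = cone v x + cone v y := by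
  unfold cone
  apply Finsupp.sum_add_index' (fun σ => by simp)
  intro σ c1 c2
  by_cases h : v ∈ σ
  · simp [h]
  · simp only [if_neg h]
    rw [add_mul, add_smul]

noncomputable def coneH (v : Fin m) : Ch m →+ Ch m := AddMonoidHom.mk' (cone v) (cone_add v)

@[simp] lemma coneH_apply (v : Fin m) (x : Ch m) : coneH v x = cone v x := rfl

lemma bdry_bdry (x : Ch m) : bdry (bdry x) = 0 := by
  induction x using Finsupp.induction with
  | zero => rw [bdry_zero, bdry_zero]
  | single_add σ c x hσ hc ih =>
    rw [bdry_add, bdry_add, ih, add_zero]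
    rw [bdry_single]
    rw [show (bdry (∑ i ∈ σ, (c * eps i σ) • Finsupp.single (σ.erase i) 1))
        = ∑ i ∈ σ, bdry ((c * eps i σ) • Finsupp.single (σ.erase i) 1) from
      map_sum bdryH _ _]
    have hterm : ∀ i ∈ σ, bdry ((c * eps i σ) • Finsupp.single (σ.erase i) 1)
        = ∑ j ∈ σ.erase i, ((c * eps i σ) * eps j (σ.erase i)) •
            Finsupp.single ((σ.erase i).erase j) 1 := by
      intro i _
      rw [Finsupp.smul_single, smul_eq_mul, mul_one, bdry_single]
    rw [Finset.sum_congr rfl hterm, Finset.sum_sigma']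
    refine Finset.sum_involution (fun p _ => ⟨p.2, p.1⟩) ?_ ?_ ?_ ?_
    · rintro ⟨i, j⟩ hp
      have hi : i ∈ σ := (Finset.mem_sigma.1 hp).1
      have hj : j ∈ σ.erase i := (Finset.mem_sigma.1 hp).2
      have hij : i ≠ j := fun h => (Finset.ne_of_mem_erase hj) h.symm
      have hjσ : j ∈ σ := Finset.mem_of_mem_erase hj
      have hsets : (σ.erase i).erase j = (σ.erase j).erase i := by
        ext a; simp only [Finset.mem_erase]; tauto
      rw [hsets, ← add_smul]
      have hcoef : c * eps i σ * eps j (σ.erase i) + c * eps j σ * eps i (σ.erase j) = 0 := by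
        rw [eps_erase hi hij, eps_erase hjσ (Ne.symm hij)]
        rcases lt_or_gt_of_ne hij with h | h
        · rw [if_pos h, if_neg (not_lt.2 h.le)]; ring
        · rw [if_neg (not_lt.2 h.le), if_pos h]; ring
      rw [hcoef, zero_smul]
    · rintro ⟨i, j⟩ hp _
      have hj : j ∈ σ.erase i := (Finset.mem_sigma.1 hp).2
      intro h
      exact Finset.ne_of_mem_erase hj (congrArg Sigma.fst h)
    · rintro ⟨i, j⟩ hp
      have hi : i ∈ σ := (Finset.mem_sigma.1 hp).1
      have hj : j ∈ σ.erase i := (Finset.mem_sigma.1 hp).2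
      refine Finset.mem_sigma.2 ⟨Finset.mem_of_mem_erase hj, ?_⟩
      exact Finset.mem_erase.2 ⟨fun h => Finset.ne_of_mem_erase hj h.symm, hi⟩
    · rintro ⟨i, j⟩ _; rfl

lemma bdry_cone_add_cone_bdry (v : Fin m) (x : Ch m) :
    bdry (cone v x) + cone v (bdry x) = x := by
  induction x using Finsupp.induction with
  | zero => simp [cone_zero, bdry_zero]
  | single_add σ c x hσ hc ih =>
    rw [cone_add, bdry_add, bdry_add, cone_add]
    have : bdry (cone v (Finsupp.single σ c)) + cone v (bdry (Finsupp.single σ c))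
        = Finsupp.single σ c := by
      by_cases hv : v ∈ σ
      · rw [cone_single, if_pos hv, bdry_zero, zero_add, bdry_single]
        rw [show cone v (∑ i ∈ σ, (c * eps i σ) • Finsupp.single (σ.erase i) 1)
            = ∑ i ∈ σ, cone v ((c * eps i σ) • Finsupp.single (σ.erase i) 1) from
          map_sum (coneH v) _ _]
        rw [Finset.sum_eq_single_of_mem v hv]
        · rw [Finsupp.smul_single, smul_eq_mul, mul_one, cone_single,
            if_neg (Finset.notMem_erase v σ), eps_self_erase,
            Finset.insert_erase hv, Finsupp.smul_single, smul_eq_mul, mul_one]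
          rw [show c * eps v σ * eps v σ = c by rw [mul_assoc, eps_sq, mul_one]]
        · intro i _ hi
          rw [Finsupp.smul_single, smul_eq_mul, mul_one, cone_single,
            if_pos (Finset.mem_erase.2 ⟨Ne.symm hi, hv⟩)]
      · rw [cone_single, if_neg hv, bdry_single,
          show ((c * eps v σ) • Finsupp.single (insert v σ) 1 : Ch m)
            = Finsupp.single (insert v σ) (c * eps v σ) by
            rw [Finsupp.smul_single, smul_eq_mul, mul_one],
          bdry_single, Finset.sum_insert hv]
        rw [show cone v (∑ i ∈ σ, (c * eps i σ) • Finsupp.single (σ.erase i) 1)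
            = ∑ i ∈ σ, cone v ((c * eps i σ) • Finsupp.single (σ.erase i) 1) from
          map_sum (coneH v) _ _]
        have h1 : (c * eps v σ * eps v (insert v σ)) •
            Finsupp.single ((insert v σ).erase v) 1 = Finsupp.single σ c := by
          rw [eps_self_insert hv, Finset.erase_insert hv, Finsupp.smul_single,
            smul_eq_mul, mul_one,
            show c * eps v σ * eps v σ = c by rw [mul_assoc, eps_sq, mul_one]]
        rw [h1, add_assoc, ← Finset.sum_add_distrib]
        have h2 : ∀ i ∈ σ, (c * eps v σ * eps i (insert v σ)) •
              Finsupp.single ((insert v σ).erase i) 1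
            + cone v ((c * eps i σ) • Finsupp.single (σ.erase i) 1) = 0 := by
          intro i hi
          have hvi : v ≠ i := fun h => hv (h ▸ hi)
          have harg : ((c * eps i σ) • Finsupp.single (σ.erase i) (1:ℤ))
              = Finsupp.single (σ.erase i) (c * eps i σ) := by
            rw [Finsupp.smul_single, smul_eq_mul, mul_one]
          rw [harg, cone_single,
            if_neg (fun hc => hv (Finset.mem_of_mem_erase hc))]
          have hset : (insert v σ).erase i = insert v (σ.erase i) :=
            Finset.erase_insert_of_ne hvi
          rw [hset, ← add_smul]
          have hco : c * eps v σ * eps i (insert v σ) + c * eps i σ * eps v (σ.erase i) = 0 := by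
            rw [eps_insert hv hvi, eps_erase hi (Ne.symm hvi)]
            rcases lt_or_gt_of_ne hvi with h | h
            · rw [if_pos h, if_neg (not_lt.2 h.le)]; ring
            · rw [if_neg (not_lt.2 h.le), if_pos h]; ring
          rw [hco, zero_smul]
        rw [Finset.sum_congr rfl h2, Finset.sum_const_zero, add_zero]
    calc bdry (cone v (Finsupp.single σ c)) + bdry (cone v x)
          + (cone v (bdry (Finsupp.single σ c)) + cone v (bdry x))
        = (bdry (cone v (Finsupp.single σ c)) + cone v (bdry (Finsupp.single σ c)))
          + (bdry (cone v x) + cone v (bdry x)) := by abel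
      _ = Finsupp.single σ c + x := by rw [this, ih]

lemma support_bdry {x : Ch m} {σ : Finset (Fin m)} (h : σ ∈ (bdry x).support) :
    ∃ τ ∈ x.support, ∃ i ∈ τ, σ = τ.erase i := by
  classical
  have h1 := Finsupp.support_sum h
  obtain ⟨τ, hτ, h2⟩ := Finset.mem_biUnion.1 h1
  have h3 := Finsupp.support_finset_sum h2
  obtain ⟨i, hi, h4⟩ := Finset.mem_biUnion.1 h3
  have h5 := Finsupp.support_smul h4
  have h6 := Finsupp.support_single_subset h5
  exact ⟨τ, hτ, i, hi, Finset.mem_singleton.1 h6⟩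

lemma support_cone {v : Fin m} {x : Ch m} {σ : Finset (Fin m)} (h : σ ∈ (cone v x).support) :
    ∃ τ ∈ x.support, v ∉ τ ∧ σ = insert v τ := by
  classical
  have h1 := Finsupp.support_sum h
  obtain ⟨τ, hτ, h2⟩ := Finset.mem_biUnion.1 h1
  by_cases hv : v ∈ τ
  · rw [if_pos hv] at h2; simp at h2
  · rw [if_neg hv] at h2
    have h5 := Finsupp.support_smul h2
    have h6 := Finsupp.support_single_subset h5
    exact ⟨τ, hτ, hv, Finset.mem_singleton.1 h6⟩

lemma cone_eq_zero {v : Fin m} {x : Ch m} (h : ∀ σ ∈ x.support, v ∈ σ) : cone v x = 0 := by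
  unfold cone
  apply Finset.sum_eq_zero
  intro σ hσ
  dsimp only
  rw [if_pos (h σ hσ)]

end Algebra

section Walks
variable {m : ℕ}

/-- oriented edge chain -/
noncomputable def ech (a b : Fin m) : Ch m :=
  if a < b then Finsupp.single {a,b} 1
  else if b < a then -Finsupp.single {a,b} 1 else 0

lemma ech_self (a : Fin m) : ech a a = 0 := by
  unfold ech; rw [if_neg (lt_irrefl a), if_neg (lt_irrefl a)]

lemma ech_symm (a b : Fin m) : ech b a = -ech a b := by
  unfold ech
  rcases lt_trichotomy a b with h | h | h
  · rw [if_neg (not_lt.2 h.le), if_pos h, if_pos h, Finset.pair_comm b a]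
  · subst h; simp
  · rw [if_pos h, if_neg (not_lt.2 h.le), if_pos h, Finset.pair_comm b a, neg_neg]

lemma eps_pair_left {a b : Fin m} (h : a < b) : eps a {a,b} = 1 := by
  unfold eps
  rw [Finset.filter_insert, if_neg (lt_irrefl a), Finset.filter_singleton,
    if_neg (not_lt.2 h.le)]
  simp

lemma eps_pair_right {a b : Fin m} (h : a < b) : eps b {a,b} = -1 := by
  unfold eps
  rw [Finset.filter_insert, if_pos h, Finset.filter_singleton, if_neg (lt_irrefl b),
    Finset.card_insert_of_notMem (Finset.notMem_empty a), Finset.card_empty, pow_one]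

lemma bdry_pair {a b : Fin m} (h : a < b) :
    bdry (Finsupp.single ({a,b} : Finset (Fin m)) 1)
      = Finsupp.single {b} 1 - Finsupp.single {a} 1 := by
  have hne : a ≠ b := h.ne
  rw [bdry_single, Finset.sum_pair hne]
  have h1 : ({a,b} : Finset (Fin m)).erase a = {b} := by
    rw [Finset.erase_insert (by simp [hne])]
  have h2 : ({a,b} : Finset (Fin m)).erase b = {a} := by
    rw [Finset.pair_comm, Finset.erase_insert (by simp [Ne.symm hne])]
  rw [h1, h2, eps_pair_left h, eps_pair_right h]
  simp only [mul_one, one_smul, mul_neg, neg_smul]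
  abel

lemma bdry_ech (a b : Fin m) :
    bdry (ech a b) = Finsupp.single {b} 1 - Finsupp.single {a} 1 := by
  unfold ech
  rcases lt_trichotomy a b with h | h | h
  · rw [if_pos h, bdry_pair h]
  · subst h; rw [if_neg (lt_irrefl a), if_neg (lt_irrefl a), bdry_zero, sub_self]
  · rw [if_neg (not_lt.2 h.le), if_pos h, bdry_neg, Finset.pair_comm, bdry_pair h, neg_sub]

lemma ech_apply_ne {a b : Fin m} {σ : Finset (Fin m)} (h : σ ≠ {a,b}) : ech a b σ = 0 := by
  unfold ech
  split_ifs
  · exact Finsupp.single_eq_of_ne' (Ne.symm h)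
  · rw [Finsupp.coe_neg, Pi.neg_apply, Finsupp.single_eq_of_ne' (Ne.symm h), neg_zero]
  · rfl

/-- chain of a walk given by a list of vertices -/
noncomputable def wch : List (Fin m) → Ch m
  | a :: b :: t => ech a b + wch (b :: t)
  | _ => 0

@[simp] lemma wch_nil : wch ([] : List (Fin m)) = 0 := rfl
@[simp] lemma wch_single (a : Fin m) : wch [a] = 0 := rfl
lemma wch_cons_cons (a b : Fin m) (t : List (Fin m)) :
    wch (a :: b :: t) = ech a b + wch (b :: t) := rfl

lemma bdry_wch : ∀ (t : List (Fin m)) (a : Fin m),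
    bdry (wch (a :: t))
      = Finsupp.single {(a :: t).getLast (List.cons_ne_nil a t)} 1 - Finsupp.single {a} 1
  | [], a => by rw [wch_single, bdry_zero, List.getLast_singleton, sub_self]
  | b :: t, a => by
    rw [wch_cons_cons, bdry_add, bdry_ech, bdry_wch t b, List.getLast_cons_cons]
    abel

lemma bdry_wch_closed {l : List (Fin m)} (h : l.head? = l.getLast?) : bdry (wch l) = 0 := by
  cases l with
  | nil => rw [wch_nil, bdry_zero]
  | cons a t =>
    rw [bdry_wch]
    have : (a :: t).getLast (List.cons_ne_nil a t) = a := by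
      rw [List.head?_cons, List.getLast?_eq_getLast (List.cons_ne_nil a t)] at h
      exact (Option.some_injective _ h).symm
    rw [this, sub_self]

lemma wch_append : ∀ (s : List (Fin m)) (x : Fin m) (t : List (Fin m)),
    wch (s ++ x :: t) = wch (s ++ [x]) + wch (x :: t)
  | [], x, t => by simp
  | [a], x, t => by
    simp only [List.cons_append, List.nil_append, wch_cons_cons]
    rw [wch_single]
    abel
  | a :: b :: s, x, t => by
    have ih := wch_append (b :: s) x t
    simp only [List.cons_append] at ih ⊢
    rw [wch_cons_cons, wch_cons_cons, ih]
    abel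

lemma bdry_tri_sorted {a b c : Fin m} (hab : a < b) (hbc : b < c) :
    bdry (Finsupp.single ({a,b,c} : Finset (Fin m)) 1) = ech a b + ech b c + ech c a := by
  have hac : a < c := hab.trans hbc
  have hab' : a ≠ b := hab.ne
  have hba' : b ≠ a := hab.ne'
  have hcb' : c ≠ b := hbc.ne'
  have hbc' : b ≠ c := hbc.ne
  have hac' : a ≠ c := hac.ne
  have hca' : c ≠ a := hac.ne'
  have hanb : a ∉ ({b,c} : Finset (Fin m)) := by simp [hab', hac']
  rw [bdry_single, Finset.sum_insert hanb, Finset.sum_pair hbc']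
  have e1 : ({a,b,c} : Finset (Fin m)).erase a = {b,c} := Finset.erase_insert hanb
  have e2 : ({a,b,c} : Finset (Fin m)).erase b = {a,c} := by
    ext u
    simp only [Finset.mem_erase, Finset.mem_insert, Finset.mem_singleton]
    constructor
    · rintro ⟨h1, h2 | h2 | h2⟩ <;> tauto
    · rintro (h1 | h1) <;> subst h1 <;> tauto
  have e3 : ({a,b,c} : Finset (Fin m)).erase c = {a,b} := by
    ext u
    simp only [Finset.mem_erase, Finset.mem_insert, Finset.mem_singleton]
    constructor
    · rintro ⟨h1, h2 | h2 | h2⟩ <;> tauto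
    · rintro (h1 | h1) <;> subst h1 <;> tauto
  have f1 : eps a ({a,b,c} : Finset (Fin m)) = 1 := by
    unfold eps
    rw [Finset.filter_insert, if_neg (lt_irrefl a), Finset.filter_insert,
      if_neg (not_lt.2 hab.le), Finset.filter_singleton, if_neg (not_lt.2 hac.le)]
    simp
  have f2 : eps b ({a,b,c} : Finset (Fin m)) = -1 := by
    unfold eps
    rw [Finset.filter_insert, if_pos hab, Finset.filter_insert, if_neg (lt_irrefl b),
      Finset.filter_singleton, if_neg (not_lt.2 hbc.le)]
    simp
  have f3 : eps c ({a,b,c} : Finset (Fin m)) = 1 := by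
    unfold eps
    rw [Finset.filter_insert, if_pos hac, Finset.filter_insert, if_pos hbc,
      Finset.filter_singleton, if_neg (lt_irrefl c),
      Finset.card_insert_of_notMem (by simp [hab'])]
    simp
  rw [e1, e2, e3, f1, f2, f3]
  have g1 : ech a b = Finsupp.single ({a,b} : Finset (Fin m)) 1 := by
    unfold ech; rw [if_pos hab]
  have g2 : ech b c = Finsupp.single ({b,c} : Finset (Fin m)) 1 := by
    unfold ech; rw [if_pos hbc]
  have g3 : ech c a = -Finsupp.single ({a,c} : Finset (Fin m)) 1 := by
    unfold ech; rw [if_neg (not_lt.2 hac.le), if_pos hac, Finset.pair_comm c a]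
  rw [g1, g2, g3]
  simp only [mul_one, one_smul, mul_neg, neg_smul]
  abel

lemma tri_fill (a b c : Fin m) (hab : a ≠ b) (hbc : b ≠ c) (hca : c ≠ a) :
    ∃ y : Ch m, y.support ⊆ {({a,b,c} : Finset (Fin m))}
      ∧ bdry y = ech a b + ech b c + ech c a := by
  rcases lt_trichotomy a b with h1 | h1 | h1
  · rcases lt_trichotomy b c with h2 | h2 | h2
    · exact ⟨Finsupp.single {a,b,c} 1, Finsupp.support_single_subset, bdry_tri_sorted h1 h2⟩
    · exact absurd h2 hbc
    · rcases lt_trichotomy a c with h3 | h3 | h3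
      · -- a < c < b : reversed
        refine ⟨-Finsupp.single {a,c,b} 1, ?_, ?_⟩
        · have : ({a,c,b} : Finset (Fin m)) = {a,b,c} := by
            ext u; simp only [Finset.mem_insert, Finset.mem_singleton]; tauto
          rw [Finsupp.support_neg, this] ; exact Finsupp.support_single_subset
        · rw [bdry_neg, bdry_tri_sorted h3 h2, ech_symm c a, ech_symm b c, ech_symm a b]
          abel
      · exact absurd h3.symm hca
      · -- c < a < b : rotation of sorted (c,a,b)
        refine ⟨Finsupp.single {c,a,b} 1, ?_, ?_⟩
        · have : ({c,a,b} : Finset (Fin m)) = {a,b,c} := by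
            ext u; simp only [Finset.mem_insert, Finset.mem_singleton]; tauto
          rw [this]; exact Finsupp.support_single_subset
        · rw [bdry_tri_sorted h3 h1]
          abel
  · exact absurd h1 hab
  · rcases lt_trichotomy a c with h2 | h2 | h2
    · -- b < a < c : reversed sorted (b,a,c)
      refine ⟨-Finsupp.single {b,a,c} 1, ?_, ?_⟩
      · have : ({b,a,c} : Finset (Fin m)) = {a,b,c} := by
          ext u; simp only [Finset.mem_insert, Finset.mem_singleton]; tauto
        rw [Finsupp.support_neg, this]; exact Finsupp.support_single_subset
      · rw [bdry_neg, bdry_tri_sorted h1 h2, ech_symm a b, ech_symm c a, ech_symm b c]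
        abel
    · exact absurd h2.symm hca
    · rcases lt_trichotomy b c with h3 | h3 | h3
      · -- b < c < a : sorted (b,c,a)
        refine ⟨Finsupp.single {b,c,a} 1, ?_, ?_⟩
        · have : ({b,c,a} : Finset (Fin m)) = {a,b,c} := by
            ext u; simp only [Finset.mem_insert, Finset.mem_singleton]; tauto
          rw [this]; exact Finsupp.support_single_subset
        · rw [bdry_tri_sorted h3 h2]
          abel
      · exact absurd h3 hbc
      · -- c < b < a : reversed sorted (c,b,a)
        refine ⟨-Finsupp.single {c,b,a} 1, ?_, ?_⟩
        · have : ({c,b,a} : Finset (Fin m)) = {a,b,c} := by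
            ext u; simp only [Finset.mem_insert, Finset.mem_singleton]; tauto
          rw [Finsupp.support_neg, this]; exact Finsupp.support_single_subset
        · rw [bdry_neg, bdry_tri_sorted h3 h1, ech_symm b c, ech_symm a b, ech_symm c a]
          abel

end Walks

section ListUtil
variable {α : Type*}

lemma not_nodup_split : ∀ {l : List α}, ¬ l.Nodup →
    ∃ (x : α) (A B C : List α), l = A ++ x :: (B ++ x :: C)
  | [], h => absurd List.nodup_nil h
  | a :: t, h => by
    rw [List.nodup_cons] at h
    push_neg at h
    by_cases ha : a ∈ t
    · obtain ⟨B, C, rfl⟩ := List.append_of_mem ha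
      exact ⟨a, [], B, C, rfl⟩
    · obtain ⟨x, A, B, C, rfl⟩ := not_nodup_split (h ha)
      exact ⟨x, a :: A, B, C, rfl⟩

lemma two_mem_split {x y : α} : ∀ {l : List α}, x ∈ l → y ∈ l → x ≠ y →
    (∃ A B C, l = A ++ x :: (B ++ y :: C)) ∨ (∃ A B C, l = A ++ y :: (B ++ x :: C))
  | [], hx, _, _ => absurd hx (List.not_mem_nil)
  | a :: t, hx, hy, hne => by
    by_cases hax : a = x
    · subst hax
      have hyt : y ∈ t := by
        rcases List.mem_cons.1 hy with h | h
        · exact absurd h.symm hne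
        · exact h
      obtain ⟨B, C, rfl⟩ := List.append_of_mem hyt
      exact Or.inl ⟨[], B, C, rfl⟩
    · by_cases hay : a = y
      · subst hay
        have hxt : x ∈ t := by
          rcases List.mem_cons.1 hx with h | h
          · exact absurd h.symm hax
          · exact h
        obtain ⟨B, C, rfl⟩ := List.append_of_mem hxt
        exact Or.inr ⟨[], B, C, rfl⟩
      · have hxt : x ∈ t := by
          rcases List.mem_cons.1 hx with h | h
          · exact absurd h.symm hax
          · exact h
        have hyt : y ∈ t := by
          rcases List.mem_cons.1 hy with h | h
          · exact absurd h.symm hay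
          · exact h
        rcases two_mem_split hxt hyt hne with ⟨A, B, C, rfl⟩ | ⟨A, B, C, rfl⟩
        · exact Or.inl ⟨a :: A, B, C, rfl⟩
        · exact Or.inr ⟨a :: A, B, C, rfl⟩

lemma head?_append_cons (A : List α) (x : α) (s t : List α) :
    (A ++ x :: s).head? = (A ++ x :: t).head? := by
  cases A <;> rfl

lemma nodup_head_ne_getLast {x : α} {t : List α} (ht : t ≠ [])
    (hnd : (x :: t).Nodup) : x ≠ (x :: t).getLast (List.cons_ne_nil x t) := by
  rw [List.getLast_cons ht]
  intro h
  exact (List.nodup_cons.1 hnd).1 (h ▸ List.getLast_mem ht)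

def edgePairs (l : List α) : List (Sym2 α) := List.zipWith (fun u v => s(u,v)) l l.tail

@[simp] lemma edgePairs_nil : edgePairs ([] : List α) = [] := rfl
@[simp] lemma edgePairs_single (a : α) : edgePairs [a] = [] := rfl
lemma edgePairs_cons_cons (a b : α) (t : List α) :
    edgePairs (a :: b :: t) = s(a,b) :: edgePairs (b :: t) := rfl

lemma mem_edgePairs : ∀ (P : List α) (u w : α) (S : List α),
    s(u,w) ∈ edgePairs (P ++ u :: w :: S)
  | [], u, w, S => by rw [List.nil_append, edgePairs_cons_cons]; exact List.mem_cons_self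
  | a :: P, u, w, S => by
    have ih := mem_edgePairs P u w S
    rcases hP : P ++ u :: w :: S with _ | ⟨c, t⟩
    · exact absurd hP (List.append_ne_nil_of_right_ne_nil P (List.cons_ne_nil u _))
    · rw [hP] at ih
      rw [List.cons_append, hP, edgePairs_cons_cons]
      exact List.mem_cons_of_mem _ ih

end ListUtil

section WalkUtil
variable {V : Type*} {G : SimpleGraph V}

def toWalk (G : SimpleGraph V) : ∀ (a : V) (l : List V), List.IsChain G.Adj (a :: l) →
    G.Walk a ((a :: l).getLast (List.cons_ne_nil a l))
  | _, [], _ => SimpleGraph.Walk.nil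
  | a, b :: l, h =>
    SimpleGraph.Walk.cons (List.chain_cons.1 h).1 (toWalk G b l (List.chain_cons.1 h).2)

lemma toWalk_support : ∀ (a : V) (l : List V) (h : List.IsChain G.Adj (a :: l)),
    (toWalk G a l h).support = a :: l
  | a, [], h => rfl
  | a, b :: l, h => by
    change (SimpleGraph.Walk.cons (List.chain_cons.1 h).1
      (toWalk G b l (List.chain_cons.1 h).2)).support = a :: b :: l
    rw [SimpleGraph.Walk.support_cons, toWalk_support b l _]

lemma toWalk_edges : ∀ (a : V) (l : List V) (h : List.IsChain G.Adj (a :: l)),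
    (toWalk G a l h).edges = edgePairs (a :: l)
  | a, [], h => rfl
  | a, b :: l, h => by
    change (SimpleGraph.Walk.cons (List.chain_cons.1 h).1
      (toWalk G b l (List.chain_cons.1 h).2)).edges = edgePairs (a :: b :: l)
    rw [SimpleGraph.Walk.edges_cons, toWalk_edges b l _, edgePairs_cons_cons]

lemma toWalk_length (a : V) (l : List V) (h : List.IsChain G.Adj (a :: l)) :
    (toWalk G a l h).length = l.length := by
  have h1 := SimpleGraph.Walk.length_support (toWalk G a l h)
  rw [toWalk_support a l h, List.length_cons] at h1
  omega

lemma edge_first {w : V} : ∀ {u v : V} (p : G.Walk u v), p.support.Nodup →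
    s(u,w) ∈ p.edges → p.support.tail.head? = some w
  | _, _, SimpleGraph.Walk.nil, _, he => by simp at he
  | u, v, SimpleGraph.Walk.cons hadj q, hnd, he => by
    rw [SimpleGraph.Walk.edges_cons, List.mem_cons] at he
    rw [SimpleGraph.Walk.support_cons] at hnd ⊢
    rcases he with he | he
    · have hw : w = _ := Sym2.congr_right.1 he
      subst hw
      rw [List.tail_cons, q.support_eq_cons]
      rfl
    · exfalso
      exact (List.nodup_cons.1 hnd).1 (SimpleGraph.Walk.fst_mem_support_of_mem_edges q he)

end WalkUtil

section CycleBuild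
variable {V : Type*} {G : SimpleGraph V}

lemma closed_list_cycle (a b : V) (rrest : List V)
    (hch : List.IsChain G.Adj (a :: b :: rrest))
    (hlast : (b :: rrest).getLast (List.cons_ne_nil b rrest) = a)
    (hnd : (a :: b :: rrest).dropLast.Nodup) (hlen : 3 ≤ rrest.length) :
    ∃ c : G.Walk a a, c.IsCycle ∧ c.support = a :: b :: rrest
      ∧ c.edges = edgePairs (a :: b :: rrest) ∧ c.length = rrest.length + 1 := by
  obtain ⟨hab, hch2⟩ := List.chain_cons.1 hch
  have q := toWalk G b rrest hch2
  let q' : G.Walk b a := (toWalk G b rrest hch2).copy rfl hlast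
  have hq'sup : q'.support = b :: rrest := by
    rw [SimpleGraph.Walk.support_copy, toWalk_support]
  have hq'edges : q'.edges = edgePairs (b :: rrest) := by
    rw [SimpleGraph.Walk.edges_copy, toWalk_edges]
  have hq'len : q'.length = rrest.length := by
    rw [SimpleGraph.Walk.length_copy, toWalk_length]
  -- dropLast structure
  set X := (b :: rrest).dropLast with hX
  have hdl : (a :: b :: rrest).dropLast = a :: X := List.dropLast_cons₂ ..
  rw [hdl] at hnd
  have hXnd : X.Nodup := (List.nodup_cons.1 hnd).2
  have haX : a ∉ X := (List.nodup_cons.1 hnd).1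
  have hXa : X ++ [a] = b :: rrest := by
    rw [hX, ← hlast]
    exact List.dropLast_append_getLast (List.cons_ne_nil b rrest)
  have hsupnd : (b :: rrest).Nodup := by
    rw [← hXa, List.nodup_append]
    exact ⟨hXnd, List.nodup_singleton a, by
      intro u hu v hv huv
      rw [List.mem_singleton] at hv
      exact haX (by rw [← hv, ← huv]; exact hu)⟩
  have hpath : q'.IsPath := SimpleGraph.Walk.IsPath.mk' (by rw [hq'sup]; exact hsupnd)
  -- X = b :: X'
  have hXcons : ∃ X', X = b :: X' ∧ X' ≠ [] := by
    rcases rrest with _ | ⟨c, rr⟩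
    · simp at hlen
    · refine ⟨(c :: rr).dropLast, List.dropLast_cons₂ .., ?_⟩
      rcases rr with _ | ⟨d, rr'⟩
      · simp at hlen
      · simp [List.dropLast_cons₂]
  obtain ⟨X', hX', hX'ne⟩ := hXcons
  have hnotedge : s(a, b) ∉ q'.edges := by
    intro he
    have he' : s(a, b) ∈ q'.reverse.edges := by
      rw [SimpleGraph.Walk.edges_reverse, List.mem_reverse]; exact he
    have hrnd : q'.reverse.support.Nodup := by
      rw [SimpleGraph.Walk.support_reverse, List.nodup_reverse, hq'sup]; exact hsupnd
    have hef := edge_first q'.reverse hrnd he'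
    rw [SimpleGraph.Walk.support_reverse, hq'sup, ← hXa, List.reverse_append,
      List.reverse_singleton, List.singleton_append, List.tail_cons,
      List.head?_reverse] at hef
    -- hef : X.getLast? = some b
    rw [hX'] at hef hXnd
    have hlb : (b :: X').getLast (List.cons_ne_nil b X') = b := by
      rw [List.getLast?_eq_getLast (List.cons_ne_nil b X')] at hef
      exact Option.some_injective _ hef
    exact nodup_head_ne_getLast hX'ne hXnd hlb.symm
  refine ⟨SimpleGraph.Walk.cons hab q', ?_, ?_, ?_, ?_⟩
  · exact (SimpleGraph.Walk.cons_isCycle_iff q' hab).2 ⟨hpath, hnotedge⟩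
  · rw [SimpleGraph.Walk.support_cons, hq'sup]
  · rw [SimpleGraph.Walk.edges_cons, hq'edges, edgePairs_cons_cons]
  · rw [SimpleGraph.Walk.length_cons, hq'len]

end CycleBuild

section FillWalk
variable {m : ℕ}

/-- "l is fillable by triangles of K inside I" -/
abbrev Fill3 (K : Finset (Finset (Fin m))) (I : Finset (Fin m)) (l : List (Fin m)) : Prop :=
  ∃ y : Ch m, (∀ σ ∈ y.support, σ ∈ K ∧ σ ⊆ I ∧ σ.card = 3) ∧ bdry y = wch l

lemma Fill3.add {K : Finset (Finset (Fin m))} {I : Finset (Fin m)} {l1 l2 : List (Fin m)}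
    {w : Ch m} (h1 : Fill3 K I l1) (h2 : Fill3 K I l2)
    (hw : w = wch l1 + wch l2) :
    ∃ y : Ch m, (∀ σ ∈ y.support, σ ∈ K ∧ σ ⊆ I ∧ σ.card = 3) ∧ bdry y = w := by
  obtain ⟨y1, hy1, hb1⟩ := h1
  obtain ⟨y2, hy2, hb2⟩ := h2
  refine ⟨y1 + y2, ?_, ?_⟩
  · intro σ hσ
    rcases Finset.mem_union.1 (Finsupp.support_add hσ) with h | h
    exacts [hy1 σ h, hy2 σ h]
  · rw [bdry_add, hb1, hb2, hw]

lemma dup_split_case (K : Finset (Finset (Fin m))) (I : Finset (Fin m)) (n : ℕ)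
    (IH : ∀ l' : List (Fin m), l'.length ≤ n → l'.IsChain (oneSkeleton K).Adj →
        (∀ u ∈ l', u ∈ I) → l'.head? = l'.getLast? → Fill3 K I l')
    (A B C' : List (Fin m)) (x : Fin m) (hC' : C' ≠ [])
    (hlen : (A ++ x :: (B ++ x :: C')).length ≤ n + 1)
    (hch : (A ++ x :: (B ++ x :: C')).IsChain (oneSkeleton K).Adj)
    (hI : ∀ u ∈ (A ++ x :: (B ++ x :: C')), u ∈ I)
    (hcl : (A ++ x :: (B ++ x :: C')).head? = (A ++ x :: (B ++ x :: C')).getLast?) :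
    Fill3 K I (A ++ x :: (B ++ x :: C')) := by
  obtain ⟨c0, C0, rfl⟩ : ∃ c0 C0, C' = c0 :: C0 := by
    rcases C' with _ | ⟨c0, C0⟩
    · exact absurd rfl hC'
    · exact ⟨c0, C0, rfl⟩
  have h1 : Fill3 K I ((x :: B) ++ [x]) := by
    apply IH
    · simp only [List.length_append, List.length_cons] at hlen ⊢
      simp at hlen ⊢
      omega
    · apply hch.infix
      refine ⟨A, c0 :: C0, ?_⟩
      simp
    · intro u hu
      apply hI
      simp only [List.mem_cons, List.mem_append, List.mem_singleton] at hu ⊢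
      tauto
    · rw [List.getLast?_concat]
      rfl
  have h2 : Fill3 K I (A ++ x :: (c0 :: C0)) := by
    apply IH
    · simp only [List.length_append, List.length_cons] at hlen ⊢
      omega
    · rw [List.isChain_append]
      obtain ⟨hA, _, hjun⟩ := List.isChain_append.1 hch
      refine ⟨hA, ?_, ?_⟩
      · apply hch.infix
        refine ⟨A ++ (x :: B), [], ?_⟩
        simp
      · intro a ha y hy
        rw [List.head?_cons, Option.mem_some_iff] at hy
        subst hy
        exact hjun a ha x (by rw [List.head?_cons]; rfl)
    · intro u hu
      apply hI
      simp only [List.mem_cons, List.mem_append, List.mem_singleton] at hu ⊢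
      tauto
    · have e1 : (A ++ x :: (c0 :: C0)).head? = (A ++ x :: (B ++ x :: (c0 :: C0))).head? :=
        head?_append_cons A x (c0 :: C0) (B ++ x :: (c0 :: C0))
      have e2 : (A ++ x :: (c0 :: C0)).getLast? = (c0 :: C0).getLast? := by
        rw [show A ++ x :: (c0 :: C0) = (A ++ [x]) ++ c0 :: C0 by simp,
          List.getLast?_append_cons]
      have e3 : (A ++ x :: (B ++ x :: (c0 :: C0))).getLast? = (c0 :: C0).getLast? := by
        rw [show A ++ x :: (B ++ x :: (c0 :: C0)) = (A ++ x :: (B ++ [x])) ++ c0 :: C0 by simp,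
          List.getLast?_append_cons]
      rw [e1, hcl, e3, ← e2]
  apply Fill3.add h1 h2
  rw [wch_append A x (B ++ x :: (c0 :: C0)),
    show x :: (B ++ x :: (c0 :: C0)) = (x :: B) ++ x :: (c0 :: C0) from rfl,
    wch_append (x :: B) x (c0 :: C0), wch_append A x (c0 :: C0)]
  abel

end FillWalk

section ChordCase
variable {m : ℕ}

lemma chord_split_case (K : Finset (Finset (Fin m))) (I : Finset (Fin m)) (n : ℕ)
    (IH : ∀ l' : List (Fin m), l'.length ≤ n → l'.IsChain (oneSkeleton K).Adj →
        (∀ v ∈ l', v ∈ I) → l'.head? = l'.getLast? → Fill3 K I l')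
    (A B C : List (Fin m)) (u w : Fin m)
    (hlen : (A ++ u :: (B ++ w :: C)).length ≤ n + 1)
    (hch : (A ++ u :: (B ++ w :: C)).IsChain (oneSkeleton K).Adj)
    (hI : ∀ v ∈ (A ++ u :: (B ++ w :: C)), v ∈ I)
    (hcl : (A ++ u :: (B ++ w :: C)).head? = (A ++ u :: (B ++ w :: C)).getLast?)
    (hadj : (oneSkeleton K).Adj u w)
    (hnotedge : s(u,w) ∉ edgePairs (A ++ u :: (B ++ w :: C))) :
    Fill3 K I (A ++ u :: (B ++ w :: C)) := by
  have hne : u ≠ w := hadj.ne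
  -- B is nonempty
  obtain ⟨b0, B0, rfl⟩ : ∃ b0 B0, B = b0 :: B0 := by
    rcases B with _ | ⟨b0, B0⟩
    · exfalso
      apply hnotedge
      have := mem_edgePairs A u w C
      simpa using this
    · exact ⟨b0, B0, rfl⟩
  -- |A| + |C| ≥ 2
  have hgood : 2 ≤ A.length + C.length := by
    rcases A with _ | ⟨a1, A1⟩
    · rcases C with _ | ⟨c1, C1⟩
      · exfalso
        rw [List.nil_append, List.head?_cons,
          show u :: ((b0 :: B0) ++ w :: ([] : List (Fin m)))
            = (u :: (b0 :: B0)) ++ [w] by simp,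
          List.getLast?_concat] at hcl
        exact hne (Option.some_injective _ hcl)
      · rcases C1 with _ | ⟨c2, C2⟩
        · exfalso
          rw [List.nil_append, List.head?_cons,
            show u :: ((b0 :: B0) ++ w :: [c1])
              = (u :: ((b0 :: B0) ++ [w])) ++ [c1] by simp,
            List.getLast?_concat] at hcl
          have hc1 : c1 = u := (Option.some_injective _ hcl).symm
          apply hnotedge
          rw [hc1, Sym2.eq_swap]
          have := mem_edgePairs (u :: (b0 :: B0)) w u ([] : List (Fin m))
          simpa using this
        · simp only [List.length_cons, List.length_nil]; omega
    · rcases C with _ | ⟨c1, C1⟩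
      · rcases A1 with _ | ⟨a2, A2⟩
        · exfalso
          rw [show [a1] ++ u :: ((b0 :: B0) ++ w :: ([] : List (Fin m)))
              = (a1 :: (u :: (b0 :: B0))) ++ [w] by simp,
            List.getLast?_concat, List.cons_append, List.head?_cons] at hcl
          have ha1 : a1 = w := Option.some_injective _ hcl
          apply hnotedge
          rw [ha1, Sym2.eq_swap]
          have := mem_edgePairs ([] : List (Fin m)) w u ((b0 :: B0) ++ w :: [])
          simpa using this
        · simp only [List.length_cons, List.length_nil]; omega
      · simp only [List.length_cons, List.length_nil]; omega
  set B := b0 :: B0 with hB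
  have hBlen : B.length = B0.length + 1 := by rw [hB, List.length_cons]
  -- the two pieces
  have h1 : Fill3 K I ((u :: (B ++ [w])) ++ [u]) := by
    apply IH
    · simp only [List.length_append, List.length_cons, List.length_singleton,
        List.length_nil] at hlen ⊢
      omega
    · rw [List.isChain_append]
      refine ⟨?_, List.isChain_singleton u, ?_⟩
      · apply hch.infix
        refine ⟨A, C, ?_⟩
        simp
      · intro a ha y hy
        rw [List.head?_cons, Option.mem_some_iff] at hy
        subst hy
        rw [show u :: (B ++ [w]) = (u :: B) ++ [w] from rfl, List.getLast?_concat,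
          Option.mem_some_iff] at ha
        subst ha
        exact hadj.symm
    · intro v hv
      apply hI
      simp only [List.mem_cons, List.mem_append, List.mem_singleton] at hv ⊢
      tauto
    · rw [show (u :: (B ++ [w])) ++ [u] = u :: ((B ++ [w]) ++ [u]) from rfl,
        List.head?_cons,
        show u :: ((B ++ [w]) ++ [u]) = (u :: (B ++ [w])) ++ [u] from rfl,
        List.getLast?_concat]
  have h2 : Fill3 K I (A ++ u :: (w :: C)) := by
    apply IH
    · simp only [List.length_append, List.length_cons, List.length_nil] at hlen ⊢
      omega
    · rw [List.isChain_append]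
      obtain ⟨hA, _, hjun⟩ := List.isChain_append.1 hch
      refine ⟨hA, ?_, ?_⟩
      · rw [List.isChain_cons_cons]
        refine ⟨hadj, ?_⟩
        apply hch.infix
        refine ⟨A ++ (u :: B), [], ?_⟩
        simp
      · intro a ha y hy
        rw [List.head?_cons, Option.mem_some_iff] at hy
        subst hy
        exact hjun a ha u (by rw [List.head?_cons]; rfl)
    · intro v hv
      apply hI
      simp only [List.mem_cons, List.mem_append, List.mem_singleton] at hv ⊢
      tauto
    · have e1 : (A ++ u :: (w :: C)).head? = (A ++ u :: (B ++ w :: C)).head? :=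
        head?_append_cons A u (w :: C) (B ++ w :: C)
      have e2 : (A ++ u :: (w :: C)).getLast? = (w :: C).getLast? := by
        rw [show A ++ u :: (w :: C) = (A ++ [u]) ++ w :: C by simp,
          List.getLast?_append_cons]
      have e3 : (A ++ u :: (B ++ w :: C)).getLast? = (w :: C).getLast? := by
        rw [show A ++ u :: (B ++ w :: C) = (A ++ u :: B) ++ w :: C by simp,
          List.getLast?_append_cons]
      rw [e1, hcl, e3, ← e2]
  apply Fill3.add h1 h2
  rw [wch_append A u (B ++ w :: C),
    show u :: (B ++ w :: C) = (u :: B) ++ w :: C from rfl,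
    wch_append (u :: B) w C,
    show (u :: (B ++ [w])) ++ [u] = (u :: B) ++ w :: [u] by simp,
    wch_append (u :: B) w [u],
    wch_append A u (w :: C),
    wch_cons_cons w u, wch_cons_cons u w, wch_single, ech_symm u w]
  abel

end ChordCase

section FillMain
variable {m : ℕ}

lemma fill_closed_walk (K : Finset (Finset (Fin m)))
    (hflag : IsFlag K) (hchordal : IsChordal (oneSkeleton K)) (I : Finset (Fin m)) :
    ∀ (n : ℕ) (l : List (Fin m)), l.length ≤ n → l.IsChain (oneSkeleton K).Adj →
      (∀ u ∈ l, u ∈ I) → l.head? = l.getLast? → Fill3 K I l := by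
  intro n
  induction n with
  | zero =>
    intro l hl _ _ _
    have : l = [] := List.eq_nil_of_length_eq_zero (Nat.le_zero.1 hl)
    subst this
    exact ⟨0, by simp, by rw [bdry_zero, wch_nil]⟩
  | succ n IH =>
    intro l hlen hch hI hcl
    rcases l with _ | ⟨a, _ | ⟨b, _ | ⟨c, _ | ⟨d, _ | ⟨e, t⟩⟩⟩⟩⟩
    · exact ⟨0, by simp, by rw [bdry_zero, wch_nil]⟩
    · exact ⟨0, by simp, by rw [bdry_zero, wch_single]⟩
    · have hba : b = a := by
        rw [show ([a,b] : List (Fin m)).head? = some a from rfl,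
          show ([a,b] : List (Fin m)).getLast? = some b from rfl] at hcl
        exact (Option.some_injective _ hcl).symm
      subst hba
      exact ⟨0, by simp, by rw [bdry_zero, wch_cons_cons, wch_single, ech_self, add_zero]⟩
    · have hca : c = a := by
        rw [show ([a,b,c] : List (Fin m)).head? = some a from rfl,
          show ([a,b,c] : List (Fin m)).getLast? = some c from rfl] at hcl
        exact (Option.some_injective _ hcl).symm
      refine ⟨0, by simp, ?_⟩
      rw [hca, bdry_zero, wch_cons_cons, wch_cons_cons, wch_single, ech_symm a b]
      abel
    · -- triangle case [a,b,c,d] with d = a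
      obtain ⟨hab, h2⟩ := List.isChain_cons_cons.1 hch
      obtain ⟨hbc, h3⟩ := List.isChain_cons_cons.1 h2
      obtain ⟨hcd, _⟩ := List.isChain_cons_cons.1 h3
      have hda : d = a := by
        rw [show ([a,b,c,d] : List (Fin m)).head? = some a from rfl,
          show ([a,b,c,d] : List (Fin m)).getLast? = some d from rfl] at hcl
        exact (Option.some_injective _ hcl).symm
      rw [hda] at hcd ⊢
      obtain ⟨y, hysupp, hyb⟩ := tri_fill a b c hab.ne hbc.ne hcd.ne
      refine ⟨y, ?_, ?_⟩
      · intro σ hσ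
        have hσ' : σ = {a,b,c} := Finset.mem_singleton.1 (hysupp hσ)
        subst hσ'
        have hKab : ({a,b} : Finset (Fin m)) ∈ K := hab.2
        have hKbc : ({b,c} : Finset (Fin m)) ∈ K := hbc.2
        have hKca : ({c,a} : Finset (Fin m)) ∈ K := hcd.2
        have hKba : ({b,a} : Finset (Fin m)) ∈ K := by rw [Finset.pair_comm]; exact hKab
        have hKcb : ({c,b} : Finset (Fin m)) ∈ K := by rw [Finset.pair_comm]; exact hKbc
        have hKac : ({a,c} : Finset (Fin m)) ∈ K := by rw [Finset.pair_comm]; exact hKca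
        refine ⟨?_, ?_, ?_⟩
        · apply hflag
          intro i hi j hj hij
          simp only [Finset.mem_insert, Finset.mem_singleton] at hi hj
          rcases hi with rfl | rfl | rfl <;> rcases hj with rfl | rfl | rfl <;>
            first
              | exact absurd rfl hij
              | assumption
        · intro v hv
          simp only [Finset.mem_insert, Finset.mem_singleton] at hv
          rcases hv with rfl | rfl | rfl <;> apply hI <;> simp
        · rw [Finset.card_eq_three]
          exact ⟨a, b, c, hab.ne, Ne.symm hcd.ne, hbc.ne, rfl⟩
      · rw [hyb, wch_cons_cons, wch_cons_cons, wch_cons_cons, wch_single]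
        abel
    · -- general case, length ≥ 5
      by_cases hnd : (a :: b :: c :: d :: e :: t).dropLast.Nodup
      case neg =>
        obtain ⟨x, A, B, C, hsplit⟩ := not_nodup_split hnd
        have hLne : (a :: b :: c :: d :: e :: t) ≠ [] := by simp
        have hdl := List.dropLast_append_getLast hLne
        have hsplit' : (a :: b :: c :: d :: e :: t)
            = A ++ x :: (B ++ x :: (C ++ [(a :: b :: c :: d :: e :: t).getLast hLne])) := by
          conv_lhs => rw [← hdl]
          rw [hsplit]
          simp
        rw [hsplit'] at hlen hch hI hcl ⊢
        exact dup_split_case K I n IH A B _ x (by simp) hlen hch hI hcl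
      case pos =>
        have hLne : (a :: b :: c :: d :: e :: t) ≠ [] := by simp
        have hheq : (a :: b :: c :: d :: e :: t).head? = some a := rfl
        have hgl : (a :: b :: c :: d :: e :: t).getLast hLne = a := by
          rw [hheq, List.getLast?_eq_getLast hLne] at hcl
          exact (Option.some_injective _ hcl).symm
        have hlast : (b :: c :: d :: e :: t).getLast (List.cons_ne_nil _ _) = a := by
          rw [← hgl]
          exact (List.getLast_cons_cons).symm
        have hch2 : List.IsChain (oneSkeleton K).Adj (a :: b :: c :: d :: e :: t) := hch
        obtain ⟨cyc, hcyc, hsup, hedges, hclen⟩ :=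
          closed_list_cycle a b (c :: d :: e :: t) hch2 hlast hnd
            (by simp only [List.length_cons]; omega)
        obtain ⟨x, y, hxs, hys, hadjxy, hnotE⟩ := hchordal a cyc hcyc
          (by rw [hclen]; simp only [List.length_cons]; omega)
        rw [hsup] at hxs hys
        rw [hedges] at hnotE
        have hne : x ≠ y := hadjxy.ne
        rcases two_mem_split hxs hys hne with ⟨A, B, C, hsp⟩ | ⟨A, B, C, hsp⟩
        · rw [hsp] at hlen hch hI hcl hnotE ⊢
          exact chord_split_case K I n IH A B C x y hlen hch hI hcl hadjxy hnotE
        · rw [hsp] at hlen hch hI hcl hnotE ⊢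
          refine chord_split_case K I n IH A B C y x hlen hch hI hcl hadjxy.symm ?_
          rw [Sym2.eq_swap]
          exact hnotE

end FillMain

section Circuit
variable {m : ℕ}

def Avail (z : Ch m) (u w : Fin m) : Prop :=
  u ≠ w ∧ ((u < w ∧ 0 < z {u,w}) ∨ (w < u ∧ z {u,w} < 0))

lemma Avail.mem_support {z : Ch m} {u w : Fin m} (h : Avail z u w) :
    ({u,w} : Finset (Fin m)) ∈ z.support := by
  rcases h.2 with ⟨_, h2⟩ | ⟨_, h2⟩ <;> exact Finsupp.mem_support_iff.2 (by omega)

lemma avail_asymm {z : Ch m} {u w : Fin m} (h1 : Avail z u w) (h2 : Avail z w u) : False := by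
  have hp : ({w,u} : Finset (Fin m)) = {u,w} := Finset.pair_comm w u
  rcases h1.2 with ⟨hlt, hv⟩ | ⟨hlt, hv⟩ <;> rcases h2.2 with ⟨hlt', hv'⟩ | ⟨hlt', hv'⟩ <;>
    rw [hp] at hv' <;> first | exact absurd hlt' (not_lt.2 hlt.le) | omega

lemma eps_pair_fst {u w : Fin m} (hne : u ≠ w) :
    eps u {u,w} = if w < u then -1 else 1 := by
  rcases lt_or_gt_of_ne hne with h | h
  · rw [if_neg (not_lt.2 h.le)]; exact eps_pair_left h
  · rw [if_pos h, Finset.pair_comm]; exact eps_pair_right h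

lemma pair_eq_pair {a b c d : Fin m} (hab : a ≠ b)
    (h : ({a,b} : Finset (Fin m)) = {c,d}) : (a = c ∧ b = d) ∨ (a = d ∧ b = c) := by
  have ha : a ∈ ({c,d} : Finset (Fin m)) := h ▸ Finset.mem_insert_self a {b}
  have hb : b ∈ ({c,d} : Finset (Fin m)) :=
    h ▸ Finset.mem_insert_of_mem (Finset.mem_singleton_self b)
  simp only [Finset.mem_insert, Finset.mem_singleton] at ha hb
  rcases ha with rfl | rfl
  · rcases hb with rfl | rfl
    · exact absurd rfl hab
    · exact Or.inl ⟨rfl, rfl⟩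
  · rcases hb with rfl | rfl
    · exact Or.inr ⟨rfl, rfl⟩
    · exact absurd rfl hab

lemma bdry_apply (z : Ch m) (τ : Finset (Fin m)) :
    bdry z τ = ∑ σ ∈ z.support, ∑ i ∈ σ,
      (z σ * eps i σ) * (if σ.erase i = τ then 1 else 0) := by
  classical
  unfold bdry
  rw [Finsupp.sum_apply]
  unfold Finsupp.sum
  apply Finset.sum_congr rfl
  intro σ _
  dsimp only
  rw [Finsupp.finset_sum_apply]
  apply Finset.sum_congr rfl
  intro i _
  rw [Finsupp.smul_apply, smul_eq_mul]
  congr 1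
  simp [Finsupp.single_apply]

lemma g_pair (z : Ch m) {t0 w : Fin m} (hne : t0 ≠ w) :
    (∑ i ∈ ({t0, w} : Finset (Fin m)),
      (z {t0,w} * eps i {t0,w}) * (if ({t0,w} : Finset (Fin m)).erase i = {w} then 1 else 0))
      = z {t0,w} * eps t0 {t0,w} := by
  rw [Finset.sum_pair hne]
  have h1 : ({t0,w} : Finset (Fin m)).erase t0 = {w} := by
    apply Finset.erase_insert
    simp [hne]
  have h2 : ({t0,w} : Finset (Fin m)).erase w ≠ {w} := by
    intro hc
    have hw : w ∈ ({t0,w} : Finset (Fin m)).erase w := by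
      rw [hc]; exact Finset.mem_singleton_self w
    exact (Finset.notMem_erase w _) hw
  rw [if_pos h1, if_neg h2]
  ring

lemma avail_exit (z : Ch m) (hcard : ∀ σ ∈ z.support, σ.card = 2) (hz : bdry z = 0)
    {u w : Fin m} (h : Avail z u w) : ∃ t, Avail z w t := by
  by_contra hno
  push_neg at hno
  have h0 : ∑ σ ∈ z.support, ∑ i ∈ σ,
      (z σ * eps i σ) * (if σ.erase i = ({w} : Finset (Fin m)) then 1 else 0) = 0 := by
    rw [← bdry_apply z {w}, hz]
    rfl
  have hterm : ∀ σ ∈ z.support, 0 ≤ ∑ i ∈ σ,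
      (z σ * eps i σ) * (if σ.erase i = ({w} : Finset (Fin m)) then 1 else 0) := by
    intro σ hσ
    by_cases hw : w ∈ σ
    · obtain ⟨x, y, hxy, hxyeq⟩ := Finset.card_eq_two.1 (hcard σ hσ)
      have hrepr : ∃ t0 : Fin m, t0 ≠ w ∧ σ = {t0, w} := by
        subst hxyeq
        simp only [Finset.mem_insert, Finset.mem_singleton] at hw
        rcases hw with rfl | rfl
        · exact ⟨y, fun hc => hxy hc.symm, Finset.pair_comm w y⟩
        · exact ⟨x, hxy, rfl⟩
      obtain ⟨t0, ht0, rfl⟩ := hrepr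
      rw [g_pair z ht0, eps_pair_fst ht0]
      have hn := hno t0
      have hp : ({w,t0} : Finset (Fin m)) = {t0,w} := Finset.pair_comm w t0
      rcases lt_or_gt_of_ne ht0 with hlt | hlt
      · rw [if_neg (not_lt.2 hlt.le), mul_one]
        by_contra hneg
        push_neg at hneg
        exact hn ⟨Ne.symm ht0, Or.inr ⟨hlt, by rw [hp]; exact hneg⟩⟩
      · rw [if_pos hlt, mul_neg_one]
        by_contra hneg
        push_neg at hneg
        have hpos : 0 < z {t0,w} := by omega
        exact hn ⟨Ne.symm ht0, Or.inl ⟨hlt, by rw [hp]; exact hpos⟩⟩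
    · apply le_of_eq
      symm
      apply Finset.sum_eq_zero
      intro i _
      rw [if_neg, mul_zero]
      intro hc
      exact hw (Finset.mem_of_mem_erase (hc ▸ Finset.mem_singleton_self w : w ∈ σ.erase i))
  have hpos : 0 < ∑ σ ∈ z.support, ∑ i ∈ σ,
      (z σ * eps i σ) * (if σ.erase i = ({w} : Finset (Fin m)) then 1 else 0) := by
    apply Finset.sum_pos' hterm
    refine ⟨{u,w}, h.mem_support, ?_⟩
    rw [g_pair z h.1, eps_pair_fst h.1]
    rcases h.2 with ⟨hlt, hv⟩ | ⟨hlt, hv⟩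
    · rw [if_neg (not_lt.2 hlt.le), mul_one]; exact hv
    · rw [if_pos hlt, mul_neg_one]; omega
  exact hpos.ne' h0

lemma exists_circuit (z : Ch m) (hz : bdry z = 0)
    (hcard : ∀ σ ∈ z.support, σ.card = 2) (hne : z ≠ 0) :
    ∃ (k : ℕ) (F : ℕ → Fin m), 3 ≤ k ∧ (∀ i < k, Avail z (F i) (F (i+1))) ∧ F k = F 0 ∧
      ∀ i j, i < j → j < k → F i ≠ F j := by
  classical
  -- initial available arrow
  have hstart : ∃ u w, Avail z u w := by
    obtain ⟨σ0, hσ0⟩ := Finsupp.support_nonempty_iff.2 hne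
    obtain ⟨x, y, hxy, rfl⟩ := Finset.card_eq_two.1 (hcard σ0 hσ0)
    have hv : z {x,y} ≠ 0 := Finsupp.mem_support_iff.1 hσ0
    rcases lt_or_gt_of_ne hxy with hlt | hlt
    · rcases lt_or_gt_of_ne hv with hv' | hv'
      · exact ⟨y, x, fun hc => hxy hc.symm,
          Or.inr ⟨hlt, by rw [Finset.pair_comm y x]; exact hv'⟩⟩
      · exact ⟨x, y, hxy, Or.inl ⟨hlt, hv'⟩⟩
    · rcases lt_or_gt_of_ne hv with hv' | hv'
      · exact ⟨x, y, hxy, Or.inr ⟨hlt, hv'⟩⟩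
      · exact ⟨y, x, fun hc => hxy hc.symm,
          Or.inl ⟨hlt, by rw [Finset.pair_comm y x]; exact hv'⟩⟩
  obtain ⟨u0, w0, h0⟩ := hstart
  -- infinite available walk
  let step : {pr : Fin m × Fin m // Avail z pr.1 pr.2} → {pr : Fin m × Fin m // Avail z pr.1 pr.2} :=
    fun p => ⟨(p.1.2, Classical.choose (avail_exit z hcard hz p.2)),
      Classical.choose_spec (avail_exit z hcard hz p.2)⟩
  let g : ℕ → {pr : Fin m × Fin m // Avail z pr.1 pr.2} := fun n => step^[n] ⟨(u0, w0), h0⟩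
  let f : ℕ → Fin m := fun n => (g n).1.1
  have hgsucc : ∀ n, g (n+1) = step (g n) := fun n => Function.iterate_succ_apply' step n _
  have havail : ∀ n, Avail z (f n) (f (n+1)) := by
    intro n
    have : f (n+1) = (g n).1.2 := by
      show (g (n+1)).1.1 = (g n).1.2
      rw [hgsucc n]
    rw [this]
    exact (g n).2
  -- pigeonhole
  have hrep : ∃ (i j : ℕ), i < j ∧ f i = f j := by
    obtain ⟨i, j, hij, hfe⟩ := Fintype.exists_ne_map_eq_of_card_lt
      (fun i : Fin (m+1) => f i) (by simp)
    rcases lt_or_gt_of_ne (fun hc => hij (Fin.ext hc) : (i:ℕ) ≠ (j:ℕ)) with hlt | hlt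
    · exact ⟨i, j, hlt, hfe⟩
    · exact ⟨j, i, hlt, hfe.symm⟩
  have hP : ∃ d, 0 < d ∧ ∃ i, f (i + d) = f i := by
    obtain ⟨i, j, hij, hfe⟩ := hrep
    exact ⟨j - i, by omega, i, by rw [show i + (j - i) = j by omega]; exact hfe.symm⟩
  classical
  have hkpos : 0 < Nat.find hP := (Nat.find_spec hP).1
  obtain ⟨i0, hik⟩ := (Nat.find_spec hP).2
  refine ⟨Nat.find hP, fun n => f (i0 + n), ?_, ?_, ?_, ?_⟩
  · -- k ≥ 3
    by_contra hk3
    push_neg at hk3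
    have hk12 : Nat.find hP = 1 ∨ Nat.find hP = 2 := by omega
    rcases hk12 with hke | hke
    · rw [hke] at hik
      exact (havail i0).1 hik.symm
    · rw [hke] at hik
      have h1 := havail (i0 + 1)
      rw [show i0 + 1 + 1 = i0 + 2 from rfl, hik] at h1
      exact avail_asymm (havail i0) h1
  · intro i _
    show Avail z (f (i0 + i)) (f (i0 + (i + 1)))
    rw [show i0 + (i + 1) = (i0 + i) + 1 by omega]
    exact havail (i0 + i)
  · show f (i0 + Nat.find hP) = f (i0 + 0)
    rw [Nat.add_zero]
    exact hik
  · intro i j hij hjk hfeq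
    have hfeq' : f ((i0 + i) + (j - i)) = f (i0 + i) := by
      rw [show (i0 + i) + (j - i) = i0 + j by omega]
      exact ((show f (i0 + i) = f (i0 + j) from hfeq)).symm
    exact Nat.find_min hP (by omega : j - i < Nat.find hP) ⟨by omega, i0 + i, hfeq'⟩

end Circuit

section OneCycle
variable {m : ℕ}

def fedges (l : List (Fin m)) : List (Finset (Fin m)) :=
  List.zipWith (fun a b => ({a,b} : Finset (Fin m))) l l.tail

@[simp] lemma fedges_nil : fedges ([] : List (Fin m)) = [] := rfl
@[simp] lemma fedges_single (a : Fin m) : fedges [a] = [] := rfl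
lemma fedges_cons_cons (a b : Fin m) (t : List (Fin m)) :
    fedges (a :: b :: t) = {a,b} :: fedges (b :: t) := rfl

lemma ech_apply_self (a b : Fin m) :
    ech a b {a,b} = if a < b then 1 else if b < a then -1 else 0 := by
  unfold ech
  split_ifs
  · exact Finsupp.single_eq_same
  · rw [Finsupp.coe_neg, Pi.neg_apply, Finsupp.single_eq_same]
  · rfl

lemma wch_bound (z : Ch m) : ∀ (l : List (Fin m)), l.IsChain (Avail z) → (fedges l).Nodup →
    (∀ σ, σ ∉ fedges l → wch l σ = 0) ∧
    (∀ σ ∈ fedges l, ((z σ - wch l σ).natAbs < (z σ).natAbs))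
  | [] => by
    intro _ _
    refine ⟨fun σ _ => rfl, fun σ h => absurd h (List.not_mem_nil)⟩
  | [a] => by
    intro _ _
    refine ⟨fun σ _ => rfl, fun σ h => absurd h (List.not_mem_nil)⟩
  | a :: b :: t => by
    intro hch hnd
    obtain ⟨hav, hch'⟩ := List.isChain_cons_cons.1 hch
    rw [fedges_cons_cons] at hnd
    obtain ⟨hnotmem, hnd'⟩ := List.nodup_cons.1 hnd
    obtain ⟨ih1, ih2⟩ := wch_bound z (b :: t) hch' hnd'
    constructor
    · intro σ hσ
      rw [fedges_cons_cons, List.mem_cons] at hσ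
      push_neg at hσ
      rw [wch_cons_cons, Finsupp.add_apply, ech_apply_ne hσ.1, ih1 σ hσ.2, add_zero]
    · intro σ hσ
      rw [fedges_cons_cons, List.mem_cons] at hσ
      rcases hσ with rfl | hσ
      · rw [wch_cons_cons, Finsupp.add_apply, ih1 _ hnotmem, add_zero, ech_apply_self]
        rcases hav.2 with ⟨hlt, hv⟩ | ⟨hlt, hv⟩
        · rw [if_pos hlt]; omega
        · rw [if_neg (not_lt.2 hlt.le), if_pos hlt]; omega
      · have hne : σ ≠ ({a,b} : Finset (Fin m)) := fun hc => hnotmem (hc ▸ hσ)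
        rw [wch_cons_cons, Finsupp.add_apply, ech_apply_ne hne, zero_add]
        exact ih2 σ hσ

lemma map_range_head {α : Type*} (F : ℕ → α) (k : ℕ) :
    List.map F (List.range (k+1)) = F 0 :: List.map (F ∘ Nat.succ) (List.range k) := by
  rw [List.range_succ_eq_map, List.map_cons, List.map_map]

lemma fedges_map_range : ∀ (k : ℕ) (F : ℕ → Fin m),
    fedges (List.map F (List.range (k+1)))
      = List.map (fun i => ({F i, F (i+1)} : Finset (Fin m))) (List.range k)
  | 0, F => by
    rw [show List.range 1 = [0] from rfl]
    rfl
  | k+1, F => by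
    have h1 := map_range_head F (k+1)
    have h2 := map_range_head (F ∘ Nat.succ) k
    have ih := fedges_map_range k (F ∘ Nat.succ)
    rw [h1, h2, fedges_cons_cons, ← h2, ih]
    have h3 := map_range_head (fun i => ({F i, F (i+1)} : Finset (Fin m))) k
    rw [h3]
    rfl

lemma onecycle_fill (K : Finset (Finset (Fin m)))
    (hflag : IsFlag K) (hchordal : IsChordal (oneSkeleton K)) (I : Finset (Fin m)) :
    ∀ (N : ℕ) (z : Ch m),
      (∑ σ ∈ z.support, (z σ).natAbs) ≤ N →
      (∀ σ ∈ z.support, σ ∈ K ∧ σ ⊆ I ∧ σ.card = 2) → bdry z = 0 →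
      ∃ y : Ch m, (∀ σ ∈ y.support, σ ∈ K ∧ σ ⊆ I ∧ σ.card = 3) ∧ bdry y = z := by
  intro N
  induction N with
  | zero =>
    intro z hN hsupp hz
    have hz0 : z = 0 := by
      by_contra hne
      obtain ⟨σ0, hσ0⟩ := Finsupp.support_nonempty_iff.2 hne
      have h1 : 1 ≤ (z σ0).natAbs := by
        have := Finsupp.mem_support_iff.1 hσ0
        omega
      have h2 : (z σ0).natAbs ≤ ∑ σ ∈ z.support, (z σ).natAbs :=
        Finset.single_le_sum (f := fun σ => (z σ).natAbs) (fun _ _ => Nat.zero_le _) hσ0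
      omega
    subst hz0
    exact ⟨0, by simp, by rw [bdry_zero]⟩
  | succ N IH =>
    intro z hN hsupp hz
    by_cases hne : z = 0
    · subst hne
      exact ⟨0, by simp, by rw [bdry_zero]⟩
    · obtain ⟨k, F, hk3, havail, hFk, hinj⟩ :=
        exists_circuit z hz (fun σ h => (hsupp σ h).2.2) hne
      set cw := List.map F (List.range (k+1)) with hcw
      have hchavail : cw.IsChain (Avail z) := by
        rw [hcw, List.isChain_map]
        exact (List.isChain_range_succ (fun a b => Avail z (F a) (F b)) k).2 havail
      have hchadj : cw.IsChain (oneSkeleton K).Adj :=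
        hchavail.imp (fun a b hav => ⟨hav.1, (hsupp _ hav.mem_support).1⟩)
      have hclosed : cw.head? = cw.getLast? := by
        have hh : cw.head? = some (F 0) := by rw [hcw, map_range_head F k]; rfl
        have hg : cw.getLast? = some (F k) := by
          rw [hcw, List.range_succ, List.map_append]
          exact List.getLast?_concat
        rw [hh, hg, hFk]
      have hmemI : ∀ u ∈ cw, u ∈ I := by
        intro u hu
        rw [hcw, List.mem_map] at hu
        obtain ⟨n, hn, rfl⟩ := hu
        rw [List.mem_range] at hn
        by_cases hnk : n < k
        · exact (hsupp _ (havail n hnk).mem_support).2.1 (Finset.mem_insert_self _ _)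
        · have : n = k := by omega
          subst this
          rw [hFk]
          exact (hsupp _ (havail 0 (by omega)).mem_support).2.1 (Finset.mem_insert_self _ _)
      have hfedges : fedges cw
          = List.map (fun i => ({F i, F (i+1)} : Finset (Fin m))) (List.range k) :=
        fedges_map_range k F
      have hfedges_mem_supp : ∀ σ ∈ fedges cw, σ ∈ z.support := by
        rw [hfedges]
        intro σ hσ
        obtain ⟨i, hi, rfl⟩ := List.mem_map.1 hσ
        exact (havail i (List.mem_range.1 hi)).mem_support
      have hkey : ∀ i j, i < j → j < k →
          ({F i, F (i+1)} : Finset (Fin m)) ≠ {F j, F (j+1)} := by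
        intro i j hij hjk heq
        have hne1 : F i ≠ F (i+1) := (havail i (by omega)).1
        rcases pair_eq_pair hne1 heq with ⟨h1, h2⟩ | ⟨h1, h2⟩
        · exact hinj i j hij hjk h1
        · by_cases hjk1 : j + 1 < k
          · exact hinj i (j+1) (by omega) hjk1 h1
          · have hj1 : j + 1 = k := by omega
            rw [hj1, hFk] at h1
            have hi0 : i = 0 := by
              by_contra hi0
              exact hinj 0 i (by omega) (by omega) h1.symm
            subst hi0
            exact hinj 1 j (by omega) (by omega) h2
      have hfednd : (fedges cw).Nodup := by
        rw [hfedges]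
        apply List.Nodup.map_on ?_ List.nodup_range
        intro i hi j hj heq
        rw [List.mem_range] at hi hj
        by_contra hij
        rcases lt_or_gt_of_ne hij with hlt | hlt
        · exact hkey i j hlt hj heq
        · exact hkey j i hlt hi heq.symm
      obtain ⟨hQ1, hQ2⟩ := wch_bound z cw hchavail hfednd
      obtain ⟨yT, hyT, hbT⟩ := fill_closed_walk K hflag hchordal I (k+1) cw
        (by rw [hcw]; simp) hchadj hmemI hclosed
      set z' := z - wch cw with hz'
      have hz'supp : z'.support ⊆ z.support := by
        intro σ hσ
        by_contra hσz
        have hzσ : z σ = 0 := Finsupp.notMem_support_iff.1 hσz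
        have hwσ : wch cw σ = 0 := by
          apply hQ1
          intro hc
          exact hσz (hfedges_mem_supp σ hc)
        have hz'0 : z' σ = 0 := by rw [hz', Finsupp.sub_apply, hzσ, hwσ, sub_zero]
        exact Finsupp.mem_support_iff.1 hσ hz'0
      have hbz' : bdry z' = 0 := by
        rw [hz', bdry_sub, hz, bdry_wch_closed hclosed, sub_zero]
      have hsupp' : ∀ σ ∈ z'.support, σ ∈ K ∧ σ ⊆ I ∧ σ.card = 2 :=
        fun σ h => hsupp σ (hz'supp h)
      have hnorm : (∑ σ ∈ z'.support, (z' σ).natAbs) ≤ N := by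
        have e1 : ∑ σ ∈ z'.support, (z' σ).natAbs = ∑ σ ∈ z.support, (z' σ).natAbs :=
          Finset.sum_subset hz'supp
            (fun σ _ hn => by rw [Finsupp.notMem_support_iff.1 hn]; rfl)
        have e2 : ∑ σ ∈ z.support, (z' σ).natAbs < ∑ σ ∈ z.support, (z σ).natAbs := by
          apply Finset.sum_lt_sum
          · intro σ hσ
            by_cases hf : σ ∈ fedges cw
            · have := hQ2 σ hf
              rw [hz', Finsupp.sub_apply]
              omega
            · rw [hz', Finsupp.sub_apply, hQ1 σ hf, sub_zero]
          · refine ⟨{F 0, F 1}, (havail 0 (by omega)).mem_support, ?_⟩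
            have hf : ({F 0, F 1} : Finset (Fin m)) ∈ fedges cw := by
              rw [hfedges]
              exact List.mem_map.2 ⟨0, List.mem_range.2 (by omega), rfl⟩
            have := hQ2 _ hf
            rw [hz', Finsupp.sub_apply]
            omega
        omega
      obtain ⟨y', hy', hby'⟩ := IH z' hnorm hsupp' hbz'
      refine ⟨y' + yT, ?_, ?_⟩
      · intro σ hσ
        rcases Finset.mem_union.1 (Finsupp.support_add hσ) with h | h
        exacts [hy' σ h, hyT σ h]
      · rw [bdry_add, hby', hbT, hz', sub_add_cancel]

end OneCycle

/-- If `K` is a flag simplicial complex whose one-skeleton is a chordal graph, then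
every full subcomplex `K_I` is homotopy equivalent to a discrete set of points;
in particular `H̃_p(K_I) = 0` for all `p ≥ 1` and all `I ⊆ [m]`: every reduced
`p`-cycle of `K_I` is a boundary. -/
theorem flag_chordal_full_subcomplexes_acyclic {m : ℕ} (K : Finset (Finset (Fin m)))
    (hempty : ∅ ∈ K) (hverts : ∀ i : Fin m, {i} ∈ K)
    (hdown : ∀ σ ∈ K, ∀ τ ⊆ σ, τ ∈ K)
    (hflag : IsFlag K) (hchordal : IsChordal (oneSkeleton K)) :
    ∀ (I : Finset (Fin m)) (p : ℕ), 1 ≤ p →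
      ∀ x : Ch m, (∀ σ ∈ x.support, σ ∈ K ∧ σ ⊆ I ∧ σ.card = p + 1) → bdry x = 0 →
        ∃ y : Ch m, (∀ σ ∈ y.support, σ ∈ K ∧ σ ⊆ I ∧ σ.card = p + 2) ∧ bdry y = x := by
  classical
  suffices H : ∀ (n : ℕ) (I : Finset (Fin m)), I.card ≤ n → ∀ (p : ℕ), 1 ≤ p →
      ∀ x : Ch m, (∀ σ ∈ x.support, σ ∈ K ∧ σ ⊆ I ∧ σ.card = p + 1) → bdry x = 0 →
        ∃ y : Ch m, (∀ σ ∈ y.support, σ ∈ K ∧ σ ⊆ I ∧ σ.card = p + 2) ∧ bdry y = x by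
    intro I p hp x hx hb
    exact H I.card I le_rfl p hp x hx hb
  intro n
  induction n with
  | zero =>
    intro I hI p hp x hx hb
    have hx0 : x = 0 := by
      by_contra hne
      obtain ⟨σ0, hσ0⟩ := Finsupp.support_nonempty_iff.2 hne
      obtain ⟨_, hsub, hcard⟩ := hx σ0 hσ0
      have hIe : I = ∅ := Finset.card_eq_zero.1 (Nat.le_zero.1 hI)
      rw [hIe, Finset.subset_empty] at hsub
      rw [hsub] at hcard
      simp at hcard
    subst hx0
    exact ⟨0, by simp, by rw [bdry_zero]⟩
  | succ n IH =>
    intro I hI p hp x hx hb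
    rcases eq_or_lt_of_le hp with hp1 | hp2
    · -- p = 1 : the chordality argument
      subst hp1
      obtain ⟨y, hy, hby⟩ := onecycle_fill K hflag hchordal I
        (∑ σ ∈ x.support, (x σ).natAbs) x le_rfl
        (fun σ h => ⟨(hx σ h).1, (hx σ h).2.1, by have := (hx σ h).2.2; omega⟩) hb
      exact ⟨y, fun σ h => ⟨(hy σ h).1, (hy σ h).2.1, by have := (hy σ h).2.2; omega⟩, hby⟩
    · -- p ≥ 2 : cone off a vertex
      by_cases hx0 : x = 0
      · subst hx0
        exact ⟨0, by simp, by rw [bdry_zero]⟩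
      -- find a vertex v ∈ I
      obtain ⟨σ0, hσ0⟩ := Finsupp.support_nonempty_iff.2 hx0
      obtain ⟨hσ0K, hσ0I, hσ0card⟩ := hx σ0 hσ0
      have hσ0ne : σ0.Nonempty := Finset.card_pos.1 (by omega)
      obtain ⟨v, hv⟩ := hσ0ne
      have hvI : v ∈ I := hσ0I hv
      -- split x
      set a := x.filter (fun σ => v ∈ σ) with ha
      set b := x.filter (fun σ => ¬ v ∈ σ) with hbdef
      have hab : a + b = x := Finsupp.filter_pos_add_filter_neg x _
      have hsuppa : ∀ σ ∈ a.support, v ∈ σ ∧ σ ∈ x.support := by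
        intro σ hσ
        rw [ha, Finsupp.support_filter, Finset.mem_filter] at hσ
        exact ⟨hσ.2, hσ.1⟩
      have hsuppb : ∀ σ ∈ b.support, v ∉ σ ∧ σ ∈ x.support := by
        intro σ hσ
        rw [hbdef, Finsupp.support_filter, Finset.mem_filter] at hσ
        exact ⟨hσ.2, hσ.1⟩
      set L := (I.erase v).filter (fun u => ({u, v} : Finset (Fin m)) ∈ K) with hL
      have hba : bdry a + bdry b = 0 := by rw [← bdry_add, hab, hb]
      have hbgeq : bdry b = -bdry a := by
        have := add_eq_zero_iff_eq_neg.1 hba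
        rw [this]
        rw [neg_neg]
      -- support of (bdry a)
      have hsuppα : ∀ σ ∈ (bdry a).support, σ ∈ K ∧ σ ⊆ L ∧ σ.card = p := by
        intro σ hσ
        have hσb : σ ∈ (bdry b).support := by
          rw [hbgeq, Finsupp.support_neg]
          exact hσ
        obtain ⟨τ, hτ, i, hi, rfl⟩ := support_bdry hσ
        obtain ⟨τ', hτ', i', hi', heq'⟩ := support_bdry hσb
        have hvτ : v ∈ τ := (hsuppa τ hτ).1
        obtain ⟨hτK, hτI, hτcard⟩ := hx τ (hsuppa τ hτ).2
        have hvnotσ : v ∉ τ.erase i := by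
          rw [heq']
          intro hc
          exact (hsuppb τ' hτ').1 (Finset.mem_of_mem_erase hc)
        have hiv : i = v := by
          by_contra hiv
          exact hvnotσ (Finset.mem_erase.2 ⟨fun hc => hiv hc.symm, hvτ⟩)
        rw [hiv] at hi ⊢
        refine ⟨hdown τ hτK _ (Finset.erase_subset v τ), ?_, ?_⟩
        · intro u hu
          have huτ : u ∈ τ := Finset.mem_of_mem_erase hu
          have huv : u ≠ v := Finset.ne_of_mem_erase hu
          rw [hL, Finset.mem_filter]
          refine ⟨Finset.mem_erase.2 ⟨huv, hτI huτ⟩, ?_⟩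
          apply hdown τ hτK
          intro j hj
          rcases Finset.mem_insert.1 hj with rfl | hj
          · exact huτ
          · rw [Finset.mem_singleton.1 hj]
            exact hvτ
        · rw [Finset.card_erase_of_mem hvτ, hτcard]
          omega
      have hLsub : L ⊆ I.erase v := by
        rw [hL]; exact Finset.filter_subset _ _
      have hLcard : L.card ≤ n := by
        have h1 : L.card ≤ (I.erase v).card := Finset.card_le_card hLsub
        have h2 : (I.erase v).card = I.card - 1 := Finset.card_erase_of_mem hvI
        have h3 : 1 ≤ I.card := Finset.card_pos.2 ⟨v, hvI⟩
        omega
      -- fill α = bdry a inside L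
      obtain ⟨β, hβsupp, hβ⟩ := IH L hLcard (p - 1) (by omega) (bdry a)
        (fun σ h => ⟨(hsuppα σ h).1, (hsuppα σ h).2.1, by have := (hsuppα σ h).2.2; omega⟩)
        (bdry_bdry a)
      have hβcard : ∀ σ ∈ β.support, σ.card = p + 1 := by
        intro σ h
        have := (hβsupp σ h).2.2
        omega
      -- the cone over β
      have hconeid := bdry_cone_add_cone_bdry v β
      have hconea : cone v (bdry a) = a := by
        have h1 := bdry_cone_add_cone_bdry v a
        rw [cone_eq_zero (fun σ h => (hsuppa σ h).1), bdry_zero, zero_add] at h1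
        exact h1
      have hby1 : bdry (cone v β) = β - a := by
        have h1 : bdry (cone v β) = β - cone v (bdry β) := eq_sub_of_add_eq hconeid
        rw [h1, hβ, hconea]
      -- the reduced cycle z' in I.erase v
      set z' := b + β with hz'
      have hbz' : bdry z' = 0 := by
        rw [hz', bdry_add, hβ, hbgeq]
        abel
      have hsuppz' : ∀ σ ∈ z'.support, σ ∈ K ∧ σ ⊆ I.erase v ∧ σ.card = p + 1 := by
        intro σ hσ
        rcases Finset.mem_union.1 (Finsupp.support_add (hz' ▸ hσ)) with h | h
        · obtain ⟨hvn, hxm⟩ := hsuppb σ h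
          obtain ⟨hK', hI', hc'⟩ := hx σ hxm
          exact ⟨hK', fun u hu => Finset.mem_erase.2
            ⟨fun hc => hvn (hc ▸ hu), hI' hu⟩, hc'⟩
        · obtain ⟨hK', hL', _⟩ := hβsupp σ h
          exact ⟨hK', fun u hu => hLsub (hL' hu), hβcard σ h⟩
      have hIe : (I.erase v).card ≤ n := by
        have h2 : (I.erase v).card = I.card - 1 := Finset.card_erase_of_mem hvI
        have h3 : 1 ≤ I.card := Finset.card_pos.2 ⟨v, hvI⟩
        omega
      obtain ⟨y2, hy2supp, hy2⟩ := IH (I.erase v) hIe p hp z' hsuppz' hbz'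
      refine ⟨y2 - cone v β, ?_, ?_⟩
      · intro σ hσ
        rcases Finset.mem_union.1 (Finsupp.support_sub hσ) with h | h
        · obtain ⟨hK', hI', hc'⟩ := hy2supp σ h
          exact ⟨hK', fun u hu => Finset.mem_of_mem_erase (hI' hu), hc'⟩
        · obtain ⟨τ, hτ, hvτ, rfl⟩ := support_cone h
          obtain ⟨hτK, hτL, _⟩ := hβsupp τ hτ
          refine ⟨?_, ?_, ?_⟩
          · apply hflag
            intro i hi j hj hij
            rcases Finset.mem_insert.1 hi with rfl | hi'
            · rcases Finset.mem_insert.1 hj with rfl | hj'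
              · exact absurd rfl hij
              · have := (Finset.mem_filter.1 (hτL hj')).2
                rw [Finset.pair_comm]
                exact this
            · rcases Finset.mem_insert.1 hj with rfl | hj'
              · exact (Finset.mem_filter.1 (hτL hi')).2
              · apply hdown τ hτK
                intro u hu
                rcases Finset.mem_insert.1 hu with rfl | hu'
                · exact hi'
                · rw [Finset.mem_singleton.1 hu']
                  exact hj'
          · intro u hu
            rcases Finset.mem_insert.1 hu with rfl | hu'
            · exact hvI
            · exact Finset.mem_of_mem_erase (hLsub (hτL hu'))
          · rw [Finset.card_insert_of_notMem hvτ, hβcard τ hτ]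
      · rw [bdry_sub, hy2, hby1, hz']
        conv_rhs => rw [← hab]
        abel
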